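/- If G and H are finite groups, then a subgroup of G × H of the form A × B (with A ≤ G, B ≤ H) attains the maximum Chermak–Delgado measure of G × H if and only if A attains the maximum in G and B attains the maximum in H; moreover every subgroup attaining the maximum in G × H is of this product form. -/
import Mathlib


/-- The Chermak–Delgado measure of a subgroup. -/
noncomputable def cdMeasure {G : Type*} [Group G] (H : Subgroup G) : ℕ :=
  Nat.card H * Nat.card (Subgroup.centralizer (H : Set G))

section aux

variable {G H : Type*} [Group G] [Group H]

lemma cent_prod_eq (M : Subgroup (G × H)) :
    Subgroup.centralizer (M : Set (G × H)) =
      (Subgroup.centralizer ((M.map (MonoidHom.fst G H)) : Set G)).prod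
        (Subgroup.centralizer ((M.map (MonoidHom.snd G H)) : Set H)) := by
  ext ⟨g, h⟩
  simp only [Subgroup.mem_prod, Subgroup.mem_centralizer_iff]
  constructor
  · intro hc
    constructor
    · rintro a ⟨⟨a', b'⟩, hm, rfl⟩
      exact congrArg Prod.fst (hc _ hm)
    · rintro b ⟨⟨a', b'⟩, hm, rfl⟩
      exact congrArg Prod.snd (hc _ hm)
  · rintro ⟨h1, h2⟩ ⟨a, b⟩ hm
    exact Prod.ext (h1 a ⟨_, hm, rfl⟩) (h2 b ⟨_, hm, rfl⟩)

lemma card_prod_sub (A : Subgroup G) (B : Subgroup H) :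
    Nat.card (A.prod B) = Nat.card A * Nat.card B := by
  rw [Nat.card_congr (A.prodEquiv B).toEquiv, Nat.card_prod]

lemma map_fst_prod (A : Subgroup G) (B : Subgroup H) :
    (A.prod B).map (MonoidHom.fst G H) = A := by
  ext a
  simp only [Subgroup.mem_map, Subgroup.mem_prod, MonoidHom.coe_fst]
  exact ⟨fun ⟨⟨x, y⟩, ⟨hx, _⟩, hxa⟩ => hxa ▸ hx, fun ha => ⟨(a, 1), ⟨ha, B.one_mem⟩, rfl⟩⟩

lemma map_snd_prod (A : Subgroup G) (B : Subgroup H) :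
    (A.prod B).map (MonoidHom.snd G H) = B := by
  ext b
  simp only [Subgroup.mem_map, Subgroup.mem_prod, MonoidHom.coe_snd]
  exact ⟨fun ⟨⟨x, y⟩, ⟨_, hy⟩, hyb⟩ => hyb ▸ hy, fun hb => ⟨(1, b), ⟨A.one_mem, hb⟩, rfl⟩⟩

lemma cent_prod (A : Subgroup G) (B : Subgroup H) :
    Subgroup.centralizer ((A.prod B : Subgroup (G × H)) : Set (G × H)) =
      (Subgroup.centralizer (A : Set G)).prod (Subgroup.centralizer (B : Set H)) := by
  rw [cent_prod_eq, map_fst_prod, map_snd_prod]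

lemma cent_map_eq (M : Subgroup (G × H)) :
    Subgroup.centralizer
        (((M.map (MonoidHom.fst G H)).prod (M.map (MonoidHom.snd G H)) : Subgroup (G × H)) :
          Set (G × H)) =
      Subgroup.centralizer (M : Set (G × H)) := by
  rw [cent_prod, ← cent_prod_eq]

lemma cd_prod (A : Subgroup G) (B : Subgroup H) :
    cdMeasure (A.prod B) = cdMeasure A * cdMeasure B := by
  rw [cdMeasure, cent_prod, card_prod_sub, card_prod_sub, cdMeasure, cdMeasure]
  ring

variable [Finite G] [Finite H]

lemma cd_pos (A : Subgroup G) : 0 < cdMeasure A :=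
  Nat.mul_pos Nat.card_pos Nat.card_pos

lemma le_prod_map (M : Subgroup (G × H)) :
    M ≤ (M.map (MonoidHom.fst G H)).prod (M.map (MonoidHom.snd G H)) := by
  rintro ⟨a, b⟩ hm
  exact ⟨⟨_, hm, rfl⟩, ⟨_, hm, rfl⟩⟩

lemma cd_le_prod_map (M : Subgroup (G × H)) :
    cdMeasure M ≤ cdMeasure ((M.map (MonoidHom.fst G H)).prod (M.map (MonoidHom.snd G H))) := by
  unfold cdMeasure
  rw [cent_map_eq]
  exact Nat.mul_le_mul_right _ (Subgroup.card_le_of_le (le_prod_map M))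

end aux

theorem cd_of_prod
    (G H : Type*) [Group G] [Group H] [Finite G] [Finite H] :
    (∀ (A : Subgroup G) (B : Subgroup H),
      ((∀ M : Subgroup (G × H), cdMeasure M ≤ cdMeasure (A.prod B)) ↔
        ((∀ K : Subgroup G, cdMeasure K ≤ cdMeasure A) ∧
          (∀ K : Subgroup H, cdMeasure K ≤ cdMeasure B)))) ∧
    (∀ M : Subgroup (G × H), (∀ N : Subgroup (G × H), cdMeasure N ≤ cdMeasure M) →
      ∃ (A : Subgroup G) (B : Subgroup H), M = A.prod B) := by
  constructor
  · intro A B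
    constructor
    · intro hmax
      constructor
      · intro K
        have := hmax (K.prod B)
        rw [cd_prod, cd_prod] at this
        exact Nat.le_of_mul_le_mul_right this (cd_pos B)
      · intro K
        have := hmax (A.prod K)
        rw [cd_prod, cd_prod] at this
        exact Nat.le_of_mul_le_mul_left
          (by simpa [Nat.mul_comm] using this) (cd_pos A)
    · rintro ⟨hA, hB⟩ M
      calc cdMeasure M
          ≤ cdMeasure ((M.map (MonoidHom.fst G H)).prod (M.map (MonoidHom.snd G H))) :=
            cd_le_prod_map M
        _ = cdMeasure (M.map (MonoidHom.fst G H)) * cdMeasure (M.map (MonoidHom.snd G H)) :=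
            cd_prod _ _
        _ ≤ cdMeasure A * cdMeasure B := Nat.mul_le_mul (hA _) (hB _)
        _ = cdMeasure (A.prod B) := (cd_prod A B).symm
  · intro M hmax
    refine ⟨M.map (MonoidHom.fst G H), M.map (MonoidHom.snd G H), ?_⟩
    set N := (M.map (MonoidHom.fst G H)).prod (M.map (MonoidHom.snd G H)) with hN
    have h1 : cdMeasure M = cdMeasure N := le_antisymm (cd_le_prod_map M) (hmax N)
    have hcard : Nat.card N ≤ Nat.card M := by
      have : Nat.card M * Nat.card (Subgroup.centralizer (M : Set (G × H))) =
          Nat.card N * Nat.card (Subgroup.centralizer (M : Set (G × H))) := by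
        have h2 := h1
        rw [show cdMeasure N = Nat.card N * Nat.card (Subgroup.centralizer (M : Set (G × H)))
          from by rw [cdMeasure, hN, cent_map_eq]] at h2
        exact h2
      exact le_of_eq (Nat.eq_of_mul_eq_mul_right Nat.card_pos this).symm
    exact Subgroup.eq_of_le_of_card_ge (le_prod_map M) hcard
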